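/- arXiv:2009.04055 — 5 statements merged into one kernel-verified Lean document; each statement's English description precedes it below -/
import Mathlib

section
/- Let V be a countably infinite dimensional K-vector space with basis (b_i)_{i∈ℤ⁺}, and let f be an endomorphism of V whose matrix with respect to this basis is row and column finite. If the image of f is finite dimensional, then the matrix of f has only finitely many nonzero entries. -/
/-- Let `V = ℕ →₀ K` with its standard basis `(bᵢ)`, and let `f` be an
endomorphism of `V` whose matrix `(i, j) ↦ f(bⱼ)ᵢ` with respect to this basis is row and column
finite.  If the image of `f` is finite dimensional, then the matrix of `f` has only finitely
many nonzero entries. -/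
theorem finite_rank_rcfm_has_finitely_many_entries {K : Type*} [Field K]
    (f : Module.End K (ℕ →₀ K))
    (hrow : ∀ i : ℕ, {j : ℕ | f (Finsupp.single j 1) i ≠ 0}.Finite)
    (hcol : ∀ j : ℕ, {i : ℕ | f (Finsupp.single j 1) i ≠ 0}.Finite)
    (hfin : FiniteDimensional K (LinearMap.range f)) :
    {p : ℕ × ℕ | f (Finsupp.single p.2 1) p.1 ≠ 0}.Finite := by
  have hfg : (LinearMap.range f).FG := (LinearMap.range f).fg_iff_finiteDimensional.mpr hfin
  obtain ⟨s, hs⟩ := hfg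
  set S : Finset ℕ := s.sup Finsupp.support with hS
  have hle : LinearMap.range f ≤ Finsupp.supported K K (↑S : Set ℕ) := by
    rw [← hs, Submodule.span_le]
    intro x hx
    rw [SetLike.mem_coe, Finsupp.mem_supported]
    intro i hi
    exact Finset.mem_coe.mpr (Finset.mem_sup.mpr ⟨x, hx, hi⟩)
  have hsub : {p : ℕ × ℕ | f (Finsupp.single p.2 1) p.1 ≠ 0} ⊆
      ⋃ i ∈ (↑S : Set ℕ), ({i} : Set ℕ) ×ˢ {j : ℕ | f (Finsupp.single j 1) i ≠ 0} := by
    rintro ⟨i, j⟩ hp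
    have hiS : i ∈ (↑S : Set ℕ) := by
      have := hle (LinearMap.mem_range_self f (Finsupp.single j 1))
      rw [Finsupp.mem_supported] at this
      exact this (Finsupp.mem_support_iff.mpr hp)
    exact Set.mem_biUnion hiS ⟨rfl, hp⟩
  exact Set.Finite.subset
    (Set.Finite.biUnion S.finite_toSet fun i _ => (Set.finite_singleton i).prod (hrow i)) hsub
end

section
/- Let E be a unital K-algebra containing a complete family of matrix units {E_{ij} : i,j ∈ ℤ⁺} spanning an ideal isomorphic to M_∞(K). Define φ : E → B(K) by sending a to the matrix whose (i,j) entry is the scalar c with E_{ii} a E_{jj} = c E_{ij}. Then φ is a K-algebra homomorphism whose image lies in the row-and-column-finite matrices, and φ restricted to the span of the E_{ij} agrees with the standard identification E_{ij} ↦ e_{ij}. -/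
private lemma smul_cancelE {K A : Type*} [Field K] [Ring A] [Module K A] {x : A}
    (hx : x ≠ 0) {r s : K} (h : r • x = s • x) : r = s := by
  by_contra hrs
  have h1 : x = (r - s)⁻¹ • ((r - s) • x) := by
    rw [smul_smul, inv_mul_cancel₀ (sub_ne_zero.mpr hrs), one_smul]
  have h2 : (r - s) • x = 0 := by rw [sub_smul, h, sub_self]
  rw [h2, smul_zero] at h1
  exact hx h1

private lemma rowRep {K A : Type*} [Field K] [Ring A] [Algebra K A]
    (E : ℕ → ℕ → A)
    (hrel : ∀ i j k l : ℕ, E i j * E k l = if j = k then E i l else 0)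
    (hne : ∀ i j : ℕ, E i j ≠ 0)
    (hspanr : ∀ (a : A) (i : ℕ),
      E i i * a ∈ Submodule.span K (Set.range fun p : ℕ × ℕ => E p.1 p.2))
    (c : A → ℕ → ℕ → K)
    (hc : ∀ (a : A) (i j : ℕ), E i i * a * E j j = c a i j • E i j)
    (a : A) (i : ℕ) :
    ∃ T : Finset ℕ, (E i i * a = ∑ k ∈ T, c a i k • E i k) ∧
      ∀ j, c a i j ≠ 0 → j ∈ T := by
  obtain ⟨f, hf⟩ := Finsupp.mem_span_range_iff_exists_finsupp.mp (hspanr a i)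
  set T : Finset ℕ := f.support.image Prod.snd with hTdef
  have hTmem : ∀ p : ℕ × ℕ, p ∈ f.support → p.2 ∈ T := fun p hp =>
    Finset.mem_image.mpr ⟨p, hp, rfl⟩
  have hEiia : E i i * a = ∑ k ∈ T, f (i, k) • E i k := by
    have h1 : E i i * a = E i i * (E i i * a) := by
      rw [← mul_assoc, hrel]; simp
    rw [h1, ← hf, Finsupp.mul_sum, Finsupp.sum]
    have key : ∀ p : ℕ × ℕ, E i i * (f p • E p.1 p.2)
        = f p • (if i = p.1 then E i p.2 else 0) := by
      intro p; rw [mul_smul_comm, hrel]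
    simp_rw [key]
    set g : ℕ × ℕ → A := fun p => f p • (if i = p.1 then E i p.2 else 0) with hg
    have e1 : ∑ p ∈ f.support, g p = ∑ p ∈ f.support ∪ ({i} ×ˢ T), g p := by
      refine Finset.sum_subset Finset.subset_union_left ?_
      intro p _ hnp
      simp [hg, Finsupp.notMem_support_iff.mp hnp]
    have e2 : ∑ p ∈ ({i} ×ˢ T), g p = ∑ p ∈ f.support ∪ ({i} ×ˢ T), g p := by
      refine Finset.sum_subset Finset.subset_union_right ?_
      intro p hpU hpn
      have hps : p ∈ f.support := (Finset.mem_union.mp hpU).resolve_right hpn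
      by_cases h : i = p.1
      · exact absurd (Finset.mem_product.mpr
          ⟨Finset.mem_singleton.mpr h.symm, hTmem p hps⟩) hpn
      · simp [hg, h]
    rw [e1, ← e2, Finset.sum_product]
    simp [hg]
  have hcf : ∀ j, c a i j = f (i, j) := by
    intro j
    have h2 : c a i j • E i j = f (i, j) • E i j := by
      rw [← hc, hEiia, Finset.sum_mul]
      have key : ∀ k, (f (i, k) • E i k) * E j j
          = if k = j then f (i, k) • E i j else 0 := by
        intro k; rw [smul_mul_assoc, hrel]; split <;> simp
      simp_rw [key]
      rw [Finset.sum_ite_eq' T j (fun k => f (i, k) • E i j)]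
      split
      · rfl
      · rename_i hjT
        have hz : f (i, j) = 0 := by
          by_contra h0
          exact hjT (hTmem (i, j) (Finsupp.mem_support_iff.mpr h0))
        rw [hz, zero_smul]
    exact smul_cancelE (hne i j) h2
  refine ⟨T, ?_, ?_⟩
  · rw [hEiia]; exact Finset.sum_congr rfl fun k _ => by rw [hcf k]
  · intro j hj
    by_contra hjT
    have hz : f (i, j) = 0 := by
      by_contra h0
      exact hjT (hTmem (i, j) (Finsupp.mem_support_iff.mpr h0))
    exact hj (by rw [hcf j, hz])

private lemma colRep {K A : Type*} [Field K] [Ring A] [Algebra K A]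
    (E : ℕ → ℕ → A)
    (hrel : ∀ i j k l : ℕ, E i j * E k l = if j = k then E i l else 0)
    (hne : ∀ i j : ℕ, E i j ≠ 0)
    (hspanl : ∀ (a : A) (j : ℕ),
      a * E j j ∈ Submodule.span K (Set.range fun p : ℕ × ℕ => E p.1 p.2))
    (c : A → ℕ → ℕ → K)
    (hc : ∀ (a : A) (i j : ℕ), E i i * a * E j j = c a i j • E i j)
    (a : A) (j : ℕ) :
    ∃ T : Finset ℕ, ∀ i, c a i j ≠ 0 → i ∈ T := by
  obtain ⟨f, hf⟩ := Finsupp.mem_span_range_iff_exists_finsupp.mp (hspanl a j)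
  set T : Finset ℕ := f.support.image Prod.fst with hTdef
  have hTmem : ∀ p : ℕ × ℕ, p ∈ f.support → p.1 ∈ T := fun p hp =>
    Finset.mem_image.mpr ⟨p, hp, rfl⟩
  have hEajj : a * E j j = ∑ k ∈ T, f (k, j) • E k j := by
    have h1 : a * E j j = (a * E j j) * E j j := by
      rw [mul_assoc, hrel]; simp
    rw [h1, ← hf, Finsupp.sum_mul, Finsupp.sum]
    have key : ∀ p : ℕ × ℕ, (f p • E p.1 p.2) * E j j
        = f p • (if p.2 = j then E p.1 j else 0) := by
      intro p; rw [smul_mul_assoc, hrel]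
    simp_rw [key]
    set g : ℕ × ℕ → A := fun p => f p • (if p.2 = j then E p.1 j else 0) with hg
    have e1 : ∑ p ∈ f.support, g p = ∑ p ∈ f.support ∪ (T ×ˢ {j}), g p := by
      refine Finset.sum_subset Finset.subset_union_left ?_
      intro p _ hnp
      simp [hg, Finsupp.notMem_support_iff.mp hnp]
    have e2 : ∑ p ∈ (T ×ˢ {j}), g p = ∑ p ∈ f.support ∪ (T ×ˢ {j}), g p := by
      refine Finset.sum_subset Finset.subset_union_right ?_
      intro p hpU hpn
      have hps : p ∈ f.support := (Finset.mem_union.mp hpU).resolve_right hpn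
      by_cases h : p.2 = j
      · exact absurd (Finset.mem_product.mpr
          ⟨hTmem p hps, Finset.mem_singleton.mpr h⟩) hpn
      · simp [hg, h]
    rw [e1, ← e2, Finset.sum_product]
    simp [hg]
  have hcf : ∀ i, c a i j = f (i, j) := by
    intro i
    have h2 : c a i j • E i j = f (i, j) • E i j := by
      rw [← hc, mul_assoc, hEajj, Finset.mul_sum]
      have key : ∀ k, E i i * (f (k, j) • E k j)
          = if i = k then f (k, j) • E i j else 0 := by
        intro k; rw [mul_smul_comm, hrel]; split <;> simp
      simp_rw [key]
      rw [Finset.sum_ite_eq T i (fun k => f (k, j) • E i j)]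
      split
      · rfl
      · rename_i hiT
        have hz : f (i, j) = 0 := by
          by_contra h0
          exact hiT (hTmem (i, j) (Finsupp.mem_support_iff.mpr h0))
        rw [hz, zero_smul]
    exact smul_cancelE (hne i j) h2
  refine ⟨T, fun i hi => ?_⟩
  by_contra hiT
  have hz : f (i, j) = 0 := by
    by_contra h0
    exact hiT (hTmem (i, j) (Finsupp.mem_support_iff.mpr h0))
  exact hi (by rw [hcf i, hz])

/-- Let `E` be a unital `K`-algebra containing a family of matrix units
`{E i j : i, j ∈ ℕ}` (nonzero, satisfying `E i j * E k l = δ_{jk} E i l`) spanning an ideal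
isomorphic to `M_∞(K)` (each `a * E j j` and `E i i * a` lies in the span of the matrix units).
Let `c a i j` be the scalar with `E i i * a * E j j = (c a i j) • E i j`; it is the `(i,j)` entry
of the map `φ : a ↦ (c a i j)`.  Then `φ` is a `K`-algebra homomorphism into the
row-and-column-finite matrices, and on the matrix units it agrees with the standard
identification `E k l ↦ e k l`. -/
theorem entry_map_is_algebra_hom {K A : Type*} [Field K] [Ring A] [Algebra K A]
    (E : ℕ → ℕ → A)
    (hrel : ∀ i j k l : ℕ, E i j * E k l = if j = k then E i l else 0)
    (hne : ∀ i j : ℕ, E i j ≠ 0)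
    (hspanl : ∀ (a : A) (j : ℕ),
      a * E j j ∈ Submodule.span K (Set.range fun p : ℕ × ℕ => E p.1 p.2))
    (hspanr : ∀ (a : A) (i : ℕ),
      E i i * a ∈ Submodule.span K (Set.range fun p : ℕ × ℕ => E p.1 p.2))
    (c : A → ℕ → ℕ → K)
    (hc : ∀ (a : A) (i j : ℕ), E i i * a * E j j = c a i j • E i j) :
    (∀ (a : A) (i : ℕ), {j : ℕ | c a i j ≠ 0}.Finite) ∧
    (∀ (a : A) (j : ℕ), {i : ℕ | c a i j ≠ 0}.Finite) ∧
    (∀ (a b : A) (i j : ℕ), c (a * b) i j = ∑ᶠ k : ℕ, c a i k * c b k j) ∧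
    (∀ (a b : A) (i j : ℕ), c (a + b) i j = c a i j + c b i j) ∧
    (∀ (r : K) (a : A) (i j : ℕ), c (r • a) i j = r * c a i j) ∧
    (∀ i j : ℕ, c 1 i j = if i = j then 1 else 0) ∧
    (∀ k l i j : ℕ, c (E k l) i j = if i = k ∧ j = l then 1 else 0) := by
  refine ⟨?_, ?_, ?_, ?_, ?_, ?_, ?_⟩
  · -- row finiteness
    intro a i
    obtain ⟨T, _, hTs⟩ := rowRep E hrel hne hspanr c hc a i
    exact Set.Finite.subset T.finite_toSet (fun j hj => hTs j hj)
  · -- column finiteness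
    intro a j
    obtain ⟨T, hTs⟩ := colRep E hrel hne hspanl c hc a j
    exact Set.Finite.subset T.finite_toSet (fun i hi => hTs i hi)
  · -- multiplicativity
    intro a b i j
    obtain ⟨T, hT, hTs⟩ := rowRep E hrel hne hspanr c hc a i
    have key : c (a * b) i j • E i j = (∑ k ∈ T, c a i k * c b k j) • E i j := by
      rw [← hc]
      have h1 : E i i * (a * b) * E j j = (E i i * a) * (b * E j j) := by
        rw [← mul_assoc, mul_assoc (E i i * a)]
      rw [h1, hT, Finset.sum_mul]
      have term : ∀ k, (c a i k • E i k) * (b * E j j)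
          = (c a i k * c b k j) • E i j := by
        intro k
        have h2 : E i k * (b * E j j) = c b k j • E i j := by
          have h3 : E i k * (b * E j j) = E i k * (E k k * b * E j j) := by
            rw [← mul_assoc, ← mul_assoc, ← mul_assoc, hrel]; simp
          rw [h3, hc, mul_smul_comm, hrel]; simp
        rw [smul_mul_assoc, h2, smul_smul]
      simp_rw [term]
      rw [← Finset.sum_smul]
    have hcval : c (a * b) i j = ∑ k ∈ T, c a i k * c b k j :=
      smul_cancelE (hne i j) key
    rw [hcval]
    refine (finsum_eq_finset_sum_of_support_subset _ ?_).symm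
    intro k hk
    have : c a i k ≠ 0 := by
      intro h0
      apply hk
      simp [Function.mem_support] at *
      simp [h0]
    exact hTs k this
  · -- additivity
    intro a b i j
    have h : c (a + b) i j • E i j = (c a i j + c b i j) • E i j := by
      rw [← hc, mul_add, add_mul, hc, hc, add_smul]
    exact smul_cancelE (hne i j) h
  · -- scalar
    intro r a i j
    have h : c (r • a) i j • E i j = (r * c a i j) • E i j := by
      rw [← hc, mul_smul_comm, smul_mul_assoc, hc, smul_smul]
    exact smul_cancelE (hne i j) h
  · -- unit
    intro i j
    have h : c 1 i j • E i j = (if i = j then (1:K) else 0) • E i j := by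
      rw [← hc, mul_one, hrel]
      split <;> simp
    exact smul_cancelE (hne i j) h
  · -- matrix units
    intro k l i j
    have h : c (E k l) i j • E i j
        = (if i = k ∧ j = l then (1:K) else 0) • E i j := by
      rw [← hc, hrel]
      by_cases h1 : i = k
      · subst h1
        rw [if_pos rfl, hrel]
        by_cases h2 : l = j
        · subst h2; simp
        · simp [h2, Ne.symm h2]
      · simp [h1]
    exact smul_cancelE (hne i j) h
end

section
/- If S is a linear endomorphism of a vector space V with finite dimensional image, then the kernel of I - S and the cokernel V/(I-S)V of I - S are finite dimensional and have equal dimension; in particular ind(I - S) = 0. -/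
/-- If `S` is a linear endomorphism of a vector space `V` with finite
dimensional image, then the kernel and cokernel of `1 - S` are finite dimensional of equal
dimension; in particular `ind (1 - S) = 0`. -/
theorem ker_coker_one_sub_finite_rank {K V : Type*} [Field K] [AddCommGroup V] [Module K V]
    (S : Module.End K V) (hS : FiniteDimensional K (LinearMap.range S)) :
    FiniteDimensional K (LinearMap.ker (1 - S)) ∧
    FiniteDimensional K (V ⧸ LinearMap.range (1 - S)) ∧
    Module.finrank K (LinearMap.ker (1 - S)) =
      Module.finrank K (V ⧸ LinearMap.range (1 - S)) := by
  set W : Submodule K V := LinearMap.range S with hWdef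
  set T : Module.End K V := 1 - S with hTdef
  have hTapp : ∀ x : V, T x = x - S x := by
    intro x; simp [hTdef, LinearMap.sub_apply]
  -- T maps W into W
  have hTW : ∀ x ∈ W, T x ∈ W := by
    intro x hx
    rw [hTapp]
    exact W.sub_mem hx (LinearMap.mem_range_self S x)
  set T' : W →ₗ[K] W := T.restrict hTW with hT'def
  -- ker T ≤ W
  have hker : LinearMap.ker T ≤ W := by
    intro x hx
    have : x - S x = 0 := by rw [← hTapp]; exact hx
    have hxS : x = S x := sub_eq_zero.mp this
    exact hxS ▸ LinearMap.mem_range_self S x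
  -- W ⊔ range T = ⊤
  have hsup : W ⊔ LinearMap.range T = ⊤ := by
    rw [eq_top_iff]
    intro x _
    have : x = S x + T x := by rw [hTapp]; abel
    rw [this]
    exact Submodule.add_mem_sup (LinearMap.mem_range_self S x) (LinearMap.mem_range_self T x)
  -- W ⊓ range T = map W.subtype (range T')
  have hinf : W ⊓ LinearMap.range T = Submodule.map W.subtype (LinearMap.range T') := by
    apply le_antisymm
    · rintro y ⟨hyW, x, hx⟩
      have hxW : x ∈ W := by
        have : x = S x + y := by rw [← hx, hTapp]; abel
        rw [this]
        exact W.add_mem (LinearMap.mem_range_self S x) hyW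
      refine ⟨T' ⟨x, hxW⟩, ⟨⟨x, hxW⟩, rfl⟩, ?_⟩
      simp [hT'def, LinearMap.restrict_apply, hx]
    · rintro y ⟨z, ⟨w, hw⟩, hz⟩
      subst hz
      constructor
      · exact z.2
      · refine ⟨(w : V), ?_⟩
        rw [← hw]
        simp [hT'def, LinearMap.restrict_apply]
  -- finite dimensionality of kernel
  have h1 : FiniteDimensional K (LinearMap.ker T) :=
    Submodule.finiteDimensional_of_le hker
  -- surjection from W onto V ⧸ range T
  have hsurj : Function.Surjective
      ((LinearMap.range T).mkQ ∘ₗ W.subtype) := by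
    intro y
    obtain ⟨x, rfl⟩ := (LinearMap.range T).mkQ_surjective y
    refine ⟨⟨S x, LinearMap.mem_range_self S x⟩, ?_⟩
    simp only [LinearMap.comp_apply, Submodule.subtype_apply, Submodule.mkQ_apply]
    rw [Submodule.Quotient.eq]
    refine ⟨-x, ?_⟩
    rw [map_neg, hTapp]; abel
  have h2 : FiniteDimensional K (V ⧸ LinearMap.range T) :=
    Module.Finite.of_surjective _ hsurj
  refine ⟨h1, h2, ?_⟩
  -- ker T = map of ker T'
  have hkerT' : LinearMap.ker T' = Submodule.comap W.subtype (LinearMap.ker T) :=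
    LinearMap.ker_restrict hTW
  have e1 : (LinearMap.ker T') ≃ₗ[K] (LinearMap.ker T) := by
    rw [hkerT']
    exact Submodule.comapSubtypeEquivOfLe hker
  -- quotient iso: V ⧸ range T ≃ W ⧸ range T'
  have e2 : (W ⧸ Submodule.comap W.subtype (W ⊓ LinearMap.range T)) ≃ₗ[K]
      (↥(W ⊔ LinearMap.range T) ⧸ Submodule.comap (W ⊔ LinearMap.range T).subtype
        (LinearMap.range T)) :=
    LinearMap.quotientInfEquivSupQuotient W (LinearMap.range T)
  have hcomap : Submodule.comap W.subtype (W ⊓ LinearMap.range T) = LinearMap.range T' := by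
    rw [hinf, Submodule.comap_map_eq_of_injective W.injective_subtype]
  have e3 : (↥(W ⊔ LinearMap.range T) ⧸ Submodule.comap (W ⊔ LinearMap.range T).subtype
        (LinearMap.range T)) ≃ₗ[K] (V ⧸ LinearMap.range T) := by
    refine Submodule.Quotient.equiv _ _
      ((LinearEquiv.ofTop _ hsup)) ?_
    ext x
    simp only [Submodule.mem_map, Submodule.mem_comap]
    constructor
    · rintro ⟨y, hy, rfl⟩; exact hy
    · intro hx
      exact ⟨⟨x, hsup ▸ Submodule.mem_top⟩, hx, rfl⟩
  have e4 : (W ⧸ LinearMap.range T') ≃ₗ[K] (V ⧸ LinearMap.range T) :=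
    ((hcomap ▸ e2 : (W ⧸ LinearMap.range T') ≃ₗ[K] _)).trans e3
  -- finrank computations
  have hrn : Module.finrank K (LinearMap.range T') + Module.finrank K (LinearMap.ker T')
      = Module.finrank K W := LinearMap.finrank_range_add_finrank_ker T'
  have hq : Module.finrank K (W ⧸ LinearMap.range T') + Module.finrank K (LinearMap.range T')
      = Module.finrank K W := Submodule.finrank_quotient_add_finrank _
  have := e1.finrank_eq
  have := e4.finrank_eq
  omega
end

section
/- Let A and B be Fredholm matrices in B(K). Then AB is Fredholm and ind(AB) = ind(A) + ind(B), where ind(A) = dim ker(A) − dim coker(A) for the induced linear map on V = ⊕_{i∈ℤ⁺} K. -/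
open LinearMap

set_option synthInstance.maxHeartbeats 1000000
set_option maxHeartbeats 2000000

/-- The submodule `V_n` of finitely supported sequences vanishing below `n`. -/
def tailSubmodule (K : Type*) [Field K] (n : ℕ) : Submodule K (ℕ →₀ K) where
  carrier := {v | ∀ i < n, v i = 0}
  add_mem' := by intro a b ha hb i hi; simp [Finsupp.add_apply, ha i hi, hb i hi]
  zero_mem' := by intro i hi; simp
  smul_mem' := by intro c a ha i hi; simp [Finsupp.smul_apply, ha i hi]

/-- The algebra of "row and column finite" endomorphisms of `ℕ →₀ K`. -/
def RCFM (K : Type*) [Field K] : Subalgebra K (Module.End K (ℕ →₀ K)) where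
  carrier := {f | ∀ n, ∃ m, ∀ v ∈ tailSubmodule K m, f v ∈ tailSubmodule K n}
  mul_mem' := by
    intro f g hf hg n
    obtain ⟨m₁, h₁⟩ := hf n
    obtain ⟨m₂, h₂⟩ := hg m₁
    exact ⟨m₂, fun v hv => h₁ _ (h₂ v hv)⟩
  add_mem' := by
    intro f g hf hg n
    obtain ⟨m₁, h₁⟩ := hf n
    obtain ⟨m₂, h₂⟩ := hg n
    refine ⟨max m₁ m₂, fun v hv => ?_⟩
    have hv₁ : v ∈ tailSubmodule K m₁ := fun i hi => hv i (lt_of_lt_of_le hi (le_max_left _ _))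
    have hv₂ : v ∈ tailSubmodule K m₂ := fun i hi => hv i (lt_of_lt_of_le hi (le_max_right _ _))
    exact (tailSubmodule K n).add_mem (h₁ v hv₁) (h₂ v hv₂)
  algebraMap_mem' := by
    intro r n
    refine ⟨n, fun v hv => ?_⟩
    have : (algebraMap K (Module.End K (ℕ →₀ K)) r) v = r • v := rfl
    rw [this]
    exact (tailSubmodule K n).smul_mem r hv

/-- Finite rank endomorphisms, playing the role of `M_∞(K)`. -/
def FinRank {K : Type*} [Field K] (f : Module.End K (ℕ →₀ K)) : Prop :=
  FiniteDimensional K (LinearMap.range f)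

variable {K : Type*} [Field K]

theorem finrank_zero : FinRank (0 : Module.End K (ℕ →₀ K)) := by
  unfold FinRank
  rw [LinearMap.range_zero]
  infer_instance

theorem finrank_add {f g : Module.End K (ℕ →₀ K)} (hf : FinRank f) (hg : FinRank g) :
    FinRank (f + g) := by
  unfold FinRank at *
  haveI := hf; haveI := hg
  have hle : LinearMap.range (f + g) ≤ LinearMap.range f ⊔ LinearMap.range g := by
    rintro x ⟨v, rfl⟩
    exact Submodule.add_mem_sup (LinearMap.mem_range_self f v) (LinearMap.mem_range_self g v)
  exact Submodule.finiteDimensional_of_le hle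

theorem finrank_neg {f : Module.End K (ℕ →₀ K)} (hf : FinRank f) : FinRank (-f) := by
  unfold FinRank at *
  rwa [LinearMap.range_neg]

theorem finrank_mul_left (f : Module.End K (ℕ →₀ K)) {g : Module.End K (ℕ →₀ K)}
    (hg : FinRank g) : FinRank (f * g) := by
  unfold FinRank at *
  haveI := hg
  rw [Module.End.mul_eq_comp, LinearMap.range_comp]
  exact Module.Finite.map _ f

theorem finrank_mul_right {f : Module.End K (ℕ →₀ K)} (g : Module.End K (ℕ →₀ K))
    (hf : FinRank f) : FinRank (f * g) := by
  unfold FinRank at *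
  haveI := hf
  have hle : LinearMap.range (f * g) ≤ LinearMap.range f := by
    rintro x ⟨v, rfl⟩; exact LinearMap.mem_range_self f (g v)
  exact Submodule.finiteDimensional_of_le hle


noncomputable instance instRingRCFM (K : Type*) [Field K] : Ring (RCFM K) :=
  @Subalgebra.toRing K (Module.End K (ℕ →₀ K)) _ _ _ (RCFM K)

/-- `M_∞(K)` as a two-sided ideal of `RCFM K`. -/
noncomputable def Minf (K : Type*) [Field K] : TwoSidedIdeal (RCFM K) :=
  TwoSidedIdeal.mk' {f : RCFM K | FinRank (f : Module.End K (ℕ →₀ K))}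
    finrank_zero
    (fun hx hy => finrank_add hx hy)
    (fun hx => finrank_neg hx)
    (fun hy => finrank_mul_left _ hy)
    (fun hx => finrank_mul_right _ hx)


/-- The quotient algebra `Q(K) = RCFM(K)/M_∞(K)`. -/
abbrev QK (K : Type*) [Field K] := (Minf K).ringCon.Quotient

/-- The quotient map `π : RCFM(K) → Q(K)`. -/
noncomputable abbrev quotMap (K : Type*) [Field K] : RCFM K →+* QK K := (Minf K).ringCon.mk'

/-- The index of an endomorphism. -/
noncomputable def ind (f : Module.End K (ℕ →₀ K)) : ℤ :=
  (Module.finrank K (LinearMap.ker f) : ℤ) -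
    (Module.finrank K ((ℕ →₀ K) ⧸ LinearMap.range f) : ℤ)


open LinearMap Module

section Aux

variable {K : Type*} [Field K] {M : Type*} [AddCommGroup M] [Module K M]

lemma aux_ker_fd (f u : M →ₗ[K] M)
    (h : FiniteDimensional K (range (u ∘ₗ f - LinearMap.id))) :
    FiniteDimensional K (ker f) := by
  haveI := h
  refine Submodule.finiteDimensional_of_le (S₂ := range (u ∘ₗ f - LinearMap.id)) ?_
  intro v hv
  have hv' : f v = 0 := hv
  exact ⟨-v, by simp [LinearMap.sub_apply, comp_apply, hv']⟩

lemma aux_coker_fd (f u : M →ₗ[K] M)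
    (h : FiniteDimensional K (range (f ∘ₗ u - LinearMap.id))) :
    FiniteDimensional K (M ⧸ range f) := by
  haveI := h
  have hsurj : Function.Surjective
      ((range f).mkQ ∘ₗ (range (f ∘ₗ u - LinearMap.id)).subtype) := by
    intro x
    obtain ⟨v, rfl⟩ := (range f).mkQ_surjective x
    refine ⟨⟨(f ∘ₗ u - LinearMap.id : M →ₗ[K] M) (-v), mem_range_self _ _⟩, ?_⟩
    have h2 : (f ∘ₗ u - LinearMap.id : M →ₗ[K] M) (-v) - v = f (u (-v)) := by
      simp only [LinearMap.sub_apply, comp_apply, id_apply, map_neg]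
      abel
    show (range f).mkQ ((f ∘ₗ u - LinearMap.id : M →ₗ[K] M) (-v)) = (range f).mkQ v
    rw [← sub_eq_zero, ← map_sub, Submodule.mkQ_apply, Submodule.Quotient.mk_eq_zero, h2]
    exact mem_range_self _ _
  exact Module.Finite.of_surjective _ hsurj

lemma aux_index_comp (f g : M →ₗ[K] M)
    [FiniteDimensional K (ker f)] [FiniteDimensional K (ker (f ∘ₗ g))]
    [FiniteDimensional K (M ⧸ range g)] [FiniteDimensional K (M ⧸ range (f ∘ₗ g))] :
    (finrank K (ker (f ∘ₗ g)) : ℤ) - finrank K (M ⧸ range (f ∘ₗ g)) =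
      ((finrank K (ker f) : ℤ) - finrank K (M ⧸ range f)) +
        ((finrank K (ker g) : ℤ) - finrank K (M ⧸ range g)) := by
  classical
  -- Step 1: finrank ker(fg) = finrank ker g + finrank (ker f ⊓ range g)
  have step1 : finrank K (ker (f ∘ₗ g)) =
      finrank K (ker g) + finrank K ↥(ker f ⊓ range g) := by
    set φ : ker (f ∘ₗ g) →ₗ[K] M := g.domRestrict (ker (f ∘ₗ g)) with hφ
    have hrange : range φ = ker f ⊓ range g := by
      apply le_antisymm
      · rintro _ ⟨⟨v, hv⟩, rfl⟩
        exact ⟨hv, mem_range_self _ _⟩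
      · rintro w ⟨hw1, v, rfl⟩
        exact ⟨⟨v, show f (g v) = 0 from hw1⟩, rfl⟩
    have hle : ker g ≤ ker (f ∘ₗ g) := by
      intro v hv
      show f (g v) = 0
      rw [show g v = 0 from hv, map_zero]
    have hker : finrank K (ker φ) = finrank K (ker g) := by
      rw [hφ, ker_domRestrict]
      exact LinearEquiv.finrank_eq (Submodule.comapSubtypeEquivOfLe hle)
    have := finrank_range_add_finrank_ker φ
    rw [hrange, hker] at this
    omega
  -- Step 3: finrank ker f = finrank T + finrank (ker f ⊓ range g), T = image of ker f in coker g
  set T : Submodule K (M ⧸ range g) := (ker f).map (range g).mkQ with hT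
  have step3 : finrank K (ker f) = finrank K T + finrank K ↥(ker f ⊓ range g) := by
    set ψ : ker f →ₗ[K] M ⧸ range g := (range g).mkQ.domRestrict (ker f) with hψ
    have hrange : range ψ = T := range_domRestrict _ _
    have hker : finrank K (ker ψ) = finrank K ↥(ker f ⊓ range g) := by
      rw [hψ, ker_domRestrict, Submodule.ker_mkQ]
      have h1 : Submodule.comap (ker f).subtype (range g) =
          Submodule.comap (ker f).subtype (ker f ⊓ range g) := by
        rw [Submodule.comap_inf, Submodule.comap_subtype_self, top_inf_eq]
      rw [h1]
      exact LinearEquiv.finrank_eq (Submodule.comapSubtypeEquivOfLe inf_le_left)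
    have := finrank_range_add_finrank_ker ψ
    rw [hrange, hker] at this
    omega
  -- Step 4: finrank coker g = finrank T + finrank (M ⧸ (range g ⊔ ker f))
  have step4 : finrank K (M ⧸ range g) =
      finrank K T + finrank K (M ⧸ (range g ⊔ ker f)) := by
    have hmap : Submodule.map (range g).mkQ (range g ⊔ ker f) = T := by
      rw [Submodule.map_sup, hT]
      have : Submodule.map (range g).mkQ (range g) = ⊥ := by
        refine eq_bot_iff.mpr ?_
        rintro _ ⟨v, hv, rfl⟩
        simpa using (Submodule.Quotient.mk_eq_zero _).mpr hv
      rw [this, bot_sup_eq]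
    have e3 := Submodule.quotientQuotientEquivQuotient (range g) (range g ⊔ ker f) le_sup_left
    rw [hmap] at e3
    have h4 := Submodule.finrank_quotient_add_finrank T
    rw [e3.finrank_eq] at h4
    omega
  -- Step 2: finrank coker (fg) = finrank coker f + finrank (M ⧸ (range g ⊔ ker f))
  have step2 : finrank K (M ⧸ range (f ∘ₗ g)) =
      finrank K (M ⧸ range f) + finrank K (M ⧸ (range g ⊔ ker f)) := by
    set S : Submodule K (M ⧸ range (f ∘ₗ g)) := (range f).map (range (f ∘ₗ g)).mkQ with hS
    have hle : range (f ∘ₗ g) ≤ range f := by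
      rintro _ ⟨v, rfl⟩; exact mem_range_self _ _
    have e3 := Submodule.quotientQuotientEquivQuotient (range (f ∘ₗ g)) (range f) hle
    set ψ : M →ₗ[K] M ⧸ range (f ∘ₗ g) := (range (f ∘ₗ g)).mkQ ∘ₗ f with hψ
    have hkerψ : ker ψ = range g ⊔ ker f := by
      rw [hψ, ker_comp, Submodule.ker_mkQ]
      have : range (f ∘ₗ g) = Submodule.map f (range g) := range_comp g f
      rw [this, Submodule.comap_map_eq]
    have hrangeψ : range ψ = S :=
      range_comp f ((range (f ∘ₗ g)).mkQ)
    have e1 : (M ⧸ (range g ⊔ ker f)) ≃ₗ[K] S :=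
      (Submodule.quotEquivOfEq _ _ hkerψ.symm).trans
        (ψ.quotKerEquivRange.trans (LinearEquiv.ofEq _ _ hrangeψ))
    have h4 := Submodule.finrank_quotient_add_finrank S
    rw [e3.finrank_eq, ← e1.finrank_eq] at h4
    omega
  rw [step1, step2, step3, step4]
  push_cast
  ring

end Aux

section Main

variable {K : Type*} [Field K]

lemma quotMap_surjective : Function.Surjective (quotMap K) :=
  fun x => Quotient.exists_rep x

lemma mem_Minf_of_quot_eq {x y : RCFM K} (h : quotMap K x = quotMap K y) :
    FinRank ((x - y : RCFM K) : Module.End K (ℕ →₀ K)) := by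
  have h1 : (Minf K).ringCon x y := Quotient.eq''.mp h
  have h2 : x - y ∈ Minf K := ((Minf K).rel_iff x y).mp h1
  rw [Minf, TwoSidedIdeal.mem_mk'] at h2
  exact h2

lemma fredholm_fd (A : RCFM K) (hA : IsUnit (quotMap K A)) :
    FiniteDimensional K (LinearMap.ker (A : Module.End K (ℕ →₀ K))) ∧
      FiniteDimensional K ((ℕ →₀ K) ⧸ LinearMap.range (A : Module.End K (ℕ →₀ K))) := by
  obtain ⟨u, hu⟩ := hA
  obtain ⟨A', hA'⟩ := quotMap_surjective (K := K) (↑u⁻¹)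
  have hright : quotMap K (A * A') = quotMap K 1 := by
    rw [map_mul, map_one, ← hu, hA', u.mul_inv]
  have hleft : quotMap K (A' * A) = quotMap K 1 := by
    rw [map_mul, map_one, ← hu, hA', u.inv_mul]
  have hr := mem_Minf_of_quot_eq hright
  have hl := mem_Minf_of_quot_eq hleft
  unfold FinRank at hr hl
  have hcoe_r : ((A * A' - 1 : RCFM K) : Module.End K (ℕ →₀ K)) =
      (A : Module.End K (ℕ →₀ K)) ∘ₗ (A' : Module.End K (ℕ →₀ K)) - LinearMap.id := rfl
  have hcoe_l : ((A' * A - 1 : RCFM K) : Module.End K (ℕ →₀ K)) =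
      (A' : Module.End K (ℕ →₀ K)) ∘ₗ (A : Module.End K (ℕ →₀ K)) - LinearMap.id := rfl
  rw [hcoe_r] at hr
  rw [hcoe_l] at hl
  exact ⟨aux_ker_fd _ _ hl, aux_coker_fd _ _ hr⟩

end Main

/-- If `A` and `B` are Fredholm matrices in `B(K)` (their images in
`B(K)/M_∞(K)` are invertible), then `A * B` is Fredholm and
`ind (A * B) = ind A + ind B`. -/
theorem fredholm_index_mul {K : Type*} [Field K] (A B : RCFM K)
    (hA : IsUnit (quotMap K A)) (hB : IsUnit (quotMap K B)) :
    IsUnit (quotMap K (A * B)) ∧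
      ind ((A * B : RCFM K) : Module.End K (ℕ →₀ K)) =
        ind (A : Module.End K (ℕ →₀ K)) + ind (B : Module.End K (ℕ →₀ K)) := by
  have hAB : IsUnit (quotMap K (A * B)) := by
    rw [map_mul]; exact hA.mul hB
  refine ⟨hAB, ?_⟩
  obtain ⟨hkA, hcA⟩ := fredholm_fd A hA
  obtain ⟨hkB, hcB⟩ := fredholm_fd B hB
  obtain ⟨hkAB, hcAB⟩ := fredholm_fd (A * B) hAB
  have hcoe : ((A * B : RCFM K) : Module.End K (ℕ →₀ K)) =
      (A : Module.End K (ℕ →₀ K)) ∘ₗ (B : Module.End K (ℕ →₀ K)) := rfl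
  rw [hcoe] at hkAB hcAB ⊢
  haveI := hkA; haveI := hcB; haveI := hkAB; haveI := hcAB
  unfold ind
  exact aux_index_comp (A : Module.End K (ℕ →₀ K)) (B : Module.End K (ℕ →₀ K))
end

section
/- Let K be a field of characteristic 0 and let D₂ = Diag(1, 2, 4, ..., 2^{i-1}, ...) be the diagonal ℤ⁺×ℤ⁺ matrix with (i,i) entry 2^{i-1}. Then the family {D₂ⁿ : n ∈ ℤ} is linearly independent modulo M_∞(K): any finite K-linear combination Σ kₙ D₂ⁿ that has only finitely many nonzero entries must have all coefficients kₙ = 0. -/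
/-- Over a field `K` of characteristic zero, let `D₂ⁿ` be the diagonal
`ℤ⁺ × ℤ⁺` matrix whose `(i,i)` entry is `(2ⁿ)ⁱ` (indices starting at `0`, `n ∈ ℤ`).  The family
`{D₂ⁿ : n ∈ ℤ}` is linearly independent modulo `M_∞(K)`: if a finite linear combination
`Σₙ kₙ D₂ⁿ` has only finitely many nonzero entries, then all coefficients vanish. -/
theorem diag_powers_linearly_independent_mod_Minf {K : Type*} [Field K] [CharZero K]
    (s : Finset ℤ) (k : ℤ → K)
    (hfin : {p : ℕ × ℕ |
      (∑ n ∈ s, k n * (if p.1 = p.2 then ((2 : K) ^ n) ^ p.1 else 0)) ≠ 0}.Finite) :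
    ∀ n ∈ s, k n = 0 := by
  intro n₀ hn₀
  have hsne : s.Nonempty := ⟨n₀, hn₀⟩
  set m : ℤ := s.min' hsne with hm
  set e : ℤ → ℕ := fun n => (n - m).toNat with he
  have h2 : (2 : K) ≠ 0 := two_ne_zero
  -- the diagonal function
  set g : ℕ → K := fun i => ∑ n ∈ s, k n * ((2 : K) ^ n) ^ i with hg
  have hgfin : {i : ℕ | g i ≠ 0}.Finite := by
    have : {i : ℕ | g i ≠ 0} = (fun i : ℕ => (i, i)) ⁻¹' {p : ℕ × ℕ |
        (∑ n ∈ s, k n * (if p.1 = p.2 then ((2 : K) ^ n) ^ p.1 else 0)) ≠ 0} := by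
      ext i; simp [hg]
    rw [this]
    exact hfin.preimage (fun a _ b _ hab => by simpa using congrArg Prod.fst hab)
  have hinf : {i : ℕ | g i = 0}.Infinite := by
    have := hgfin.infinite_compl
    simpa [Set.compl_setOf] using this
  set P : Polynomial K := ∑ n ∈ s, Polynomial.C (k n) * Polynomial.X ^ e n with hP
  have key : ∀ i : ℕ, P.eval ((2 : K) ^ i) = (2 : K) ^ (-(m * i)) * g i := by
    intro i
    rw [hP, Polynomial.eval_finset_sum, hg, Finset.mul_sum]
    refine Finset.sum_congr rfl fun n hn => ?_
    have hen : (e n : ℤ) = n - m := by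
      have := s.min'_le n hn
      simp [he]; omega
    rw [Polynomial.eval_mul, Polynomial.eval_C, Polynomial.eval_pow, Polynomial.eval_X]
    rw [mul_comm ((2:K) ^ (-(m * i))) _, mul_assoc]
    congr 1
    rw [← zpow_natCast (2:K) i, ← zpow_natCast ((2:K)^(i:ℤ)) (e n),
        ← zpow_mul, ← zpow_natCast (((2:K)^n)) i, ← zpow_mul, ← zpow_add₀ h2]
    congr 1
    rw [hen]; ring
  have hroots : {x : K | P.IsRoot x}.Infinite := by
    have hinj : Function.Injective (fun i : ℕ => (2 : K) ^ i) := by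
      intro a b hab
      have : ((2 ^ a : ℕ) : K) = ((2 ^ b : ℕ) : K) := by push_cast; simpa using hab
      exact Nat.pow_right_injective le_rfl (Nat.cast_injective this)
    apply Set.Infinite.mono (s := (fun i : ℕ => (2 : K) ^ i) '' {i | g i = 0})
    · rintro x ⟨i, hi, rfl⟩
      simp only [Set.mem_setOf_eq, Polynomial.IsRoot]
      rw [key i, hi, mul_zero]
    · exact hinf.image (hinj.injOn)
  have hP0 : P = 0 := Polynomial.eq_zero_of_infinite_isRoot P hroots
  have hcoeff : P.coeff (e n₀) = k n₀ := by
    rw [hP, Polynomial.finset_sum_coeff]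
    rw [Finset.sum_eq_single n₀]
    · simp
    · intro n hn hne
      have hen : e n ≠ e n₀ := by
        have h1 := s.min'_le n hn
        have h2 := s.min'_le n₀ hn₀
        simp only [he]; omega
      simp [Polynomial.coeff_X_pow, hen, Ne.symm hen]
    · intro h; exact absurd hn₀ h
  rw [hP0] at hcoeff
  simpa using hcoeff.symm
end
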